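/- Let n, d be positive integers, p : Fin n → ℝ a probability distribution (p ≥ 0, ∑_i p_i = 1), and σ : Fin n → Matrix (Fin d) (Fin d) ℂ a family of density matrices. Let ρ be the block-diagonal matrix indexed by Fin n × Fin d with entries ρ((i,a),(j,b)) = p_i·σ_i(a,b) if i = j and 0 otherwise. Then S(ρ) = ∑_i (−p_i·log₂ p_i) + ∑_i p_i·S(σ_i). (Entropy of a classical-quantum state.) -/

import Mathlib

open Matrix BigOperators Kronecker
open scoped ComplexOrder

noncomputable section
open Classical

/-- The positive semidefinite square root of a matrix (junk value `0` if not PSD). -/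
def msqrt {d : Type*} [Fintype d] [DecidableEq d] (A : Matrix d d ℂ) : Matrix d d ℂ :=
  if h : A.PosSemidef then
    (h.1.eigenvectorUnitary : Matrix d d ℂ) *
      diagonal (fun i => ((Real.sqrt (h.1.eigenvalues i) : ℝ) : ℂ)) *
      (star (h.1.eigenvectorUnitary : Matrix d d ℂ))
  else 0

/-- The trace norm `Tr √(AᴴA)` of a complex matrix. -/
def traceNorm {d : Type*} [Fintype d] [DecidableEq d] (A : Matrix d d ℂ) : ℝ :=
  ((msqrt (Aᴴ * A)).trace).re

/-- `ρ` is a density matrix: positive semidefinite with trace `1`. -/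
def IsDensityMatrix {d : Type*} [Fintype d] [DecidableEq d] (ρ : Matrix d d ℂ) : Prop :=
  ρ.PosSemidef ∧ ρ.trace = 1

/-- Von Neumann entropy, base 2 (junk value `0` if not Hermitian). -/
def vnEntropy {d : Type*} [Fintype d] [DecidableEq d] (ρ : Matrix d d ℂ) : ℝ :=
  if h : ρ.IsHermitian then -∑ i, (h.eigenvalues i) * Real.logb 2 (h.eigenvalues i) else 0

/-- The binary entropy function, base 2. -/
def binEntropy (p : ℝ) : ℝ := -p * Real.logb 2 p - (1 - p) * Real.logb 2 (1 - p)

/-- Fidelity of two matrices: `(Tr √(√ρ₁ ρ₂ √ρ₁))²`. -/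
def fidelity {d : Type*} [Fintype d] [DecidableEq d] (ρ₁ ρ₂ : Matrix d d ℂ) : ℝ :=
  (((msqrt (msqrt ρ₁ * ρ₂ * msqrt ρ₁)).trace).re) ^ 2

/-- Partial trace over the second tensor factor. -/
def ptraceSnd {m k : ℕ} (ρ : Matrix (Fin m × Fin k) (Fin m × Fin k) ℂ) :
    Matrix (Fin m) (Fin m) ℂ :=
  Matrix.of fun i j => ∑ l : Fin k, ρ (i, l) (j, l)

end

noncomputable section AuxCq
open Classical Polynomial

private lemma aux_charpoly_conj {m : Type*} [Fintype m] [DecidableEq m]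
    (U V B : Matrix m m ℂ) (h1 : U * V = 1) :
    (U * B * V).charpoly = B.charpoly := by
  unfold Matrix.charpoly
  have hmap : ∀ (M N : Matrix m m ℂ), (M * N).map (C : ℂ →+* ℂ[X])
      = M.map C * N.map C := fun M N => by
    simpa using (RingHom.mapMatrix (C : ℂ →+* ℂ[X])).map_mul M N
  have hone : (1 : Matrix m m ℂ).map (C : ℂ →+* ℂ[X]) = 1 := by
    simpa using (RingHom.mapMatrix (C : ℂ →+* ℂ[X])).map_one
  have hm : charmatrix (U * B * V) = U.map C * charmatrix B * V.map C := by
    unfold charmatrix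
    simp only [RingHom.mapMatrix_apply]
    rw [Matrix.mul_sub, Matrix.sub_mul, hmap, hmap]
    congr 1
    have hc : Commute (Matrix.scalar m (X : ℂ[X])) (U.map C) :=
      (Matrix.scalar_commute _ (fun r' => Commute.all _ _) _)
    rw [← hc.eq, Matrix.mul_assoc, ← hmap, h1, hone, Matrix.mul_one]
  rw [hm, Matrix.det_mul, Matrix.det_mul]
  have : (U.map (C : ℂ →+* ℂ[X])).det * (V.map C).det = 1 := by
    rw [← Matrix.det_mul, ← hmap, h1, hone, Matrix.det_one]
  calc (U.map (C : ℂ →+* ℂ[X])).det * (charmatrix B).det * (V.map C).det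
      = (charmatrix B).det * ((U.map C).det * (V.map C).det) := by ring
    _ = (charmatrix B).det := by rw [this, mul_one]

private lemma aux_charpoly_diagonal {m : Type*} [Fintype m] [DecidableEq m]
    (f : m → ℂ) : (Matrix.diagonal f).charpoly = ∏ i, (X - C (f i)) := by
  have hm : charmatrix (Matrix.diagonal f) = Matrix.diagonal fun i => X - C (f i) := by
    ext i j
    by_cases h : i = j
    · subst h; simp
    · simp [h]
  rw [Matrix.charpoly, hm, Matrix.det_diagonal]

private lemma aux_charpoly_hermitian {m : Type*} [Fintype m] [DecidableEq m]
    {A : Matrix m m ℂ} (hA : A.IsHermitian) :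
    A.charpoly = ∏ i, (X - C ((hA.eigenvalues i : ℂ))) := by
  conv_lhs => rw [hA.spectral_theorem, Unitary.conjStarAlgAut_apply]
  rw [aux_charpoly_conj _ _ _ ((Matrix.mem_unitaryGroup_iff).mp (hA.eigenvectorUnitary).2),
    aux_charpoly_diagonal]
  rfl

private lemma aux_prod_multiset {κ : Type*} [Fintype κ] (ν : κ → ℝ) :
    ∏ i, (X - C ((ν i : ℂ))) = ((Finset.univ.val.map fun i => ((ν i : ℂ))).map
      fun a => X - C a).prod := by
  rw [Multiset.map_map]
  rfl

private lemma aux_sum_f_eigenvalues {m : Type*} [Fintype m] [DecidableEq m]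
    {ι : Type*} [Fintype ι] {A : Matrix m m ℂ} (hA : A.IsHermitian) (μ : ι → ℝ)
    (h : A.charpoly = ∏ i, (X - C ((μ i : ℂ)))) (f : ℝ → ℝ) :
    ∑ k, f (hA.eigenvalues k) = ∑ i, f (μ i) := by
  have h2 := aux_charpoly_hermitian hA
  have hroots : (Finset.univ.val.map fun k : m => ((hA.eigenvalues k : ℂ)))
      = Finset.univ.val.map fun i : ι => ((μ i : ℂ)) := by
    have := congrArg Polynomial.roots (h2.symm.trans h)
    rw [aux_prod_multiset (fun k : m => hA.eigenvalues k), aux_prod_multiset μ,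
      Polynomial.roots_multiset_prod_X_sub_C,
      Polynomial.roots_multiset_prod_X_sub_C] at this
    exact this
  have hreal : (Finset.univ.val.map fun k : m => hA.eigenvalues k)
      = Finset.univ.val.map μ := by
    apply Multiset.map_injective Complex.ofReal_injective
    rw [Multiset.map_map, Multiset.map_map]
    exact hroots
  show ((Finset.univ.val.map fun k : m => f (hA.eigenvalues k))).sum
      = ((Finset.univ.val.map fun i : ι => f (μ i))).sum
  rw [show (Finset.univ.val.map fun k : m => f (hA.eigenvalues k))
      = (Finset.univ.val.map fun k : m => hA.eigenvalues k).map f by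
    rw [Multiset.map_map]; rfl, hreal, Multiset.map_map]
  rfl

private lemma aux_charpoly_blockDiagonal {k m : Type*} [Fintype k] [DecidableEq k]
    [Fintype m] [DecidableEq m] (M : k → Matrix m m ℂ) :
    (Matrix.blockDiagonal M).charpoly = ∏ i, (M i).charpoly := by
  have hm : charmatrix (Matrix.blockDiagonal M)
      = Matrix.blockDiagonal fun i => charmatrix (M i) := by
    ext ⟨a, i⟩ ⟨b, j⟩
    by_cases h : i = j
    · subst h
      by_cases hab : a = b
      · subst hab; simp [charmatrix_apply, Matrix.blockDiagonal_apply]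
      · simp [charmatrix_apply, Matrix.blockDiagonal_apply, Matrix.diagonal_apply,
          Prod.ext_iff, hab]
    · simp [charmatrix_apply, Matrix.blockDiagonal_apply, Matrix.diagonal_apply,
        Prod.ext_iff, h]
  rw [Matrix.charpoly, hm, Matrix.det_blockDiagonal]
  rfl

private lemma aux_g_split (x y : ℝ) :
    (x * y) * Real.logb 2 (x * y)
      = y * (x * Real.logb 2 x) + x * (y * Real.logb 2 y) := by
  rcases eq_or_ne x 0 with hx | hx
  · simp [hx]
  rcases eq_or_ne y 0 with hy | hy
  · simp [hy]
  rw [Real.logb_mul hx hy]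
  ring

end AuxCq

/-- Entropy of a classical-quantum (block diagonal) state:
`S(∑ᵢ pᵢ |i⟩⟨i| ⊗ σᵢ) = H(p) + ∑ᵢ pᵢ S(σᵢ)`. -/
theorem entropy_cq_state (n d : ℕ) (hn : 0 < n) (hd : 0 < d)
    (p : Fin n → ℝ) (hp0 : ∀ i, 0 ≤ p i) (hp1 : ∑ i, p i = 1)
    (σ : Fin n → Matrix (Fin d) (Fin d) ℂ) (hσ : ∀ i, IsDensityMatrix (σ i)) :
    vnEntropy (Matrix.of fun x y : Fin n × Fin d =>
        if x.1 = y.1 then (p x.1 : ℂ) * σ x.1 x.2 y.2 else 0) =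
      (∑ i, -(p i * Real.logb 2 (p i))) + ∑ i, p i * vnEntropy (σ i) := by
  classical
  open Polynomial in
  set ρ : Matrix (Fin n × Fin d) (Fin n × Fin d) ℂ :=
    Matrix.of fun x y : Fin n × Fin d =>
      if x.1 = y.1 then (p x.1 : ℂ) * σ x.1 x.2 y.2 else 0 with hρdef
  have hσH : ∀ i, (σ i).IsHermitian := fun i => (hσ i).1.1
  set lam : ∀ i : Fin n, Fin d → ℝ := fun i => (hσH i).eigenvalues with hlam
  -- ρ is Hermitian
  have hρ : ρ.IsHermitian := by
    ext ⟨i, a⟩ ⟨j, b⟩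
    simp only [hρdef, Matrix.conjTranspose_apply, Matrix.of_apply]
    by_cases h : i = j
    · subst h
      have hs : (starRingEnd ℂ) (σ i b a) = σ i a b := by
        have := congrFun (congrFun (hσH i) a) b
        simpa [Matrix.conjTranspose_apply] using this
      simp only [eq_self_iff_true, if_true, star_mul', RCLike.star_def,
        Complex.conj_ofReal, hs]
    · simp [h, Ne.symm h]
  -- block matrices
  set M : Fin n → Matrix (Fin d) (Fin d) ℂ := fun i => (p i : ℂ) • σ i with hM
  -- charpoly of each block
  have hblock : ∀ i, (M i).charpoly = ∏ a, (X - C ((p i * lam i a : ℝ) : ℂ)) := by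
    intro i
    have hU := (Matrix.mem_unitaryGroup_iff).mp ((hσH i).eigenvectorUnitary).2
    have hdec : M i = ((hσH i).eigenvectorUnitary : Matrix (Fin d) (Fin d) ℂ)
        * Matrix.diagonal (fun a => ((p i * lam i a : ℝ) : ℂ))
        * star ((hσH i).eigenvectorUnitary : Matrix (Fin d) (Fin d) ℂ) := by
      have hdiag : Matrix.diagonal (fun a => ((p i * lam i a : ℝ) : ℂ))
          = (p i : ℂ) • Matrix.diagonal (RCLike.ofReal ∘ lam i) := by
        ext a b
        by_cases hab : a = b
        · subst hab
          simp [Matrix.diagonal_apply, Function.comp]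
        · simp [Matrix.diagonal_apply, hab]
      simp only [hM]
      rw [hdiag, Matrix.mul_smul, Matrix.smul_mul]
      congr 1
      exact (hσH i).spectral_theorem
    rw [hdec, aux_charpoly_conj _ _ _ hU, aux_charpoly_diagonal]
  -- charpoly of ρ
  have hρeq : ρ = Matrix.reindex (Equiv.prodComm (Fin d) (Fin n))
      (Equiv.prodComm (Fin d) (Fin n)) (Matrix.blockDiagonal M) := by
    ext ⟨i, a⟩ ⟨j, b⟩
    simp only [hρdef, Matrix.reindex_apply, Matrix.submatrix_apply, Equiv.prodComm_symm,
      Equiv.prodComm_apply, Prod.swap_prod_mk, Matrix.blockDiagonal_apply, hM,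
      Matrix.smul_apply, Matrix.of_apply, smul_eq_mul]
  have hcharρ : ρ.charpoly
      = ∏ x : Fin n × Fin d, (X - C ((p x.1 * lam x.1 x.2 : ℝ) : ℂ)) := by
    rw [hρeq, Matrix.charpoly_reindex, aux_charpoly_blockDiagonal]
    rw [Fintype.prod_prod_type]
    exact Finset.prod_congr rfl fun i _ => hblock i
  -- the eigenvalue sum identity
  have hsum := aux_sum_f_eigenvalues hρ (fun x : Fin n × Fin d => p x.1 * lam x.1 x.2)
    hcharρ (fun t => t * Real.logb 2 t)
  -- trace facts: eigenvalues of σ i sum to 1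
  have htr : ∀ i, ∑ a, lam i a = 1 := by
    intro i
    have hU' := (Matrix.mem_unitaryGroup_iff').mp ((hσH i).eigenvectorUnitary).2
    have h1 : (σ i).trace = ∑ a, ((lam i a : ℂ)) := by
      conv_lhs => rw [(hσH i).spectral_theorem, Unitary.conjStarAlgAut_apply]
      rw [Matrix.trace_mul_cycle, hU', Matrix.one_mul, Matrix.trace_diagonal]
      rfl
    have h2 : ((∑ a, lam i a : ℝ) : ℂ) = ((1 : ℝ) : ℂ) := by
      push_cast
      rw [← h1]
      exact (hσ i).2
    exact_mod_cast h2
  -- unfold entropies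
  rw [vnEntropy, dif_pos hρ, hsum]
  have hvnσ : ∀ i, vnEntropy (σ i) = -∑ a, lam i a * Real.logb 2 (lam i a) := fun i => by
    rw [vnEntropy, dif_pos (hσH i)]
  rw [Fintype.sum_prod_type]
  have hterm : ∀ i, ∑ a, (p i * lam i a) * Real.logb 2 (p i * lam i a)
      = p i * Real.logb 2 (p i) - p i * vnEntropy (σ i) := by
    intro i
    rw [hvnσ i]
    calc ∑ a, (p i * lam i a) * Real.logb 2 (p i * lam i a)
        = ∑ a, (lam i a * (p i * Real.logb 2 (p i))
            + p i * (lam i a * Real.logb 2 (lam i a))) := by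
          exact Finset.sum_congr rfl fun a _ => aux_g_split (p i) (lam i a)
      _ = (∑ a, lam i a) * (p i * Real.logb 2 (p i))
            + p i * ∑ a, lam i a * Real.logb 2 (lam i a) := by
          rw [Finset.sum_add_distrib, ← Finset.sum_mul, ← Finset.mul_sum]
      _ = p i * Real.logb 2 (p i) - p i * -∑ a, lam i a * Real.logb 2 (lam i a) := by
          rw [htr i]; ring
  rw [Finset.sum_congr rfl fun i _ => hterm i]
  rw [Finset.sum_sub_distrib]
  simp [Finset.sum_neg_distrib]
  abel
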